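/- Let Ω := ℝ × (−1,1) ⊂ ℝ² and let u : ℝ² → [0,∞) be continuously differentiable, vanishing outside Ω, even in each variable (u(x₁,x₂) = u(−x₁,x₂) = u(x₁,−x₂)), and nonincreasing in each variable on the positive quadrant (if 0 ≤ x₁ ≤ X₁ and 0 ≤ x₂ ≤ X₂ < 1 then u(X₁,X₂) ≤ u(x₁,x₂)), with ∫_Ω u(x)² dx < ∞ and ∫_Ω |∇u(x)|² dx < ∞. Then for every (x₁,x₂) ∈ Ω with |x₁| ≤ 1 and x₂ ≠ 0, u(x₁,x₂) ≤ |x₂|^{−1/2} [ ( ∫_Ω u(x)² dx )^{1/2} + ( ∫_Ω |∇u(x)|² dx )^{1/2} ]. -/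

import Mathlib

open MeasureTheory Real

/-- The infinite planar strip `Ω = ℝ × (-1,1) ⊂ ℝ²`. -/
def strip : Set (EuclideanSpace ℝ (Fin 2)) := {x | x 1 ∈ Set.Ioo (-1 : ℝ) 1}

/-- The point `(a, b)` of `ℝ²` as an element of `EuclideanSpace ℝ (Fin 2)`. -/
noncomputable def pt (a b : ℝ) : EuclideanSpace ℝ (Fin 2) :=
  (WithLp.equiv 2 (Fin 2 → ℝ)).symm ![a, b]

lemma pt_apply_zero (a b : ℝ) : pt a b 0 = a := rfl

lemma pt_apply_one (a b : ℝ) : pt a b 1 = b := rfl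

lemma pt_line (c s : ℝ) : pt s c = pt 0 c + s • pt 1 0 := by
  ext i
  fin_cases i <;>
    simp [pt, PiLp.add_apply, PiLp.smul_apply, smul_eq_mul]

lemma norm_pt_one_zero : ‖pt 1 0‖ = 1 := by
  rw [EuclideanSpace.norm_eq]
  simp [Fin.sum_univ_two, pt]

lemma continuous_pt : Continuous fun p : ℝ × ℝ => pt p.1 p.2 := by
  have h : Continuous fun p : ℝ × ℝ => (![p.1, p.2] : Fin 2 → ℝ) := by
    apply continuous_pi
    intro i
    fin_cases i
    · simpa using continuous_fst
    · simpa using continuous_snd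
  exact ((PiLp.continuousLinearEquiv 2 ℝ (fun _ : Fin 2 => ℝ)).symm.continuous.comp h : _)

/-- Cauchy–Schwarz for interval integrals of nonneg continuous functions. -/
lemma cs_interval (φ : ℝ → ℝ) (hφ : Continuous φ) (h0 : ∀ t, 0 ≤ φ t) (c : ℝ) (hc : 0 ≤ c) :
    ∫ t in (0:ℝ)..c, φ t ≤ Real.sqrt c * Real.sqrt (∫ t in (0:ℝ)..c, φ t ^ 2) := by
  rw [intervalIntegral.integral_of_le hc, intervalIntegral.integral_of_le hc]
  set μ := volume.restrict (Set.Ioc (0:ℝ) c) with hμ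
  haveI : IsFiniteMeasure μ := ⟨by
    rw [hμ, Measure.restrict_apply_univ]; exact measure_Ioc_lt_top⟩
  have hpq : Real.HolderConjugate 2 2 := Real.HolderConjugate.two_two
  obtain ⟨C, hC⟩ := (isCompact_Icc (a := (0:ℝ)) (b := c)).exists_bound_of_continuousOn
    hφ.continuousOn
  have hmem : MemLp φ (ENNReal.ofReal 2) μ := by
    apply MemLp.of_bound hφ.aestronglyMeasurable C
    rw [hμ]
    filter_upwards [ae_restrict_mem measurableSet_Ioc] with x hx
    exact hC x (Set.Ioc_subset_Icc_self hx)
  have hone : MemLp (fun _ : ℝ => (1:ℝ)) (ENNReal.ofReal 2) μ := memLp_const 1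
  have key := integral_mul_le_Lp_mul_Lq_of_nonneg hpq
    (Filter.Eventually.of_forall h0) (Filter.Eventually.of_forall fun _ => zero_le_one)
    hmem hone
  simp only [mul_one] at key
  have h1 : ∫ a, (1:ℝ) ^ (2:ℝ) ∂μ = c := by
    simp [hμ, Real.volume_Ioc, ENNReal.toReal_ofReal hc, hc]
  rw [h1] at key
  have h2 : ∫ a, φ a ^ (2:ℝ) ∂μ = ∫ a, φ a ^ 2 ∂μ := by
    refine integral_congr_ae (Filter.Eventually.of_forall fun x => ?_)
    show φ x ^ (2:ℝ) = φ x ^ (2:ℕ)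
    rw [← Real.rpow_natCast (φ x) 2]; norm_num
  rw [h2] at key
  calc ∫ t, φ t ∂μ ≤ (∫ a, φ a ^ 2 ∂μ) ^ (1/2 : ℝ) * c ^ (1/2 : ℝ) := key
    _ = Real.sqrt c * Real.sqrt (∫ a, φ a ^ 2 ∂μ) := by
        rw [← Real.sqrt_eq_rpow, ← Real.sqrt_eq_rpow, mul_comm]

/-- The measurable equiv `(t,s) ↦ pt s t` from `ℝ × ℝ` to `EuclideanSpace ℝ (Fin 2)`. -/
noncomputable def E2 : (ℝ × ℝ) ≃ᵐ EuclideanSpace ℝ (Fin 2) :=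
  (MeasurableEquiv.prodComm.trans MeasurableEquiv.finTwoArrow.symm).trans
    (MeasurableEquiv.toLp 2 (Fin 2 → ℝ))

lemma E2_apply (t s : ℝ) : E2 (t, s) = pt s t := rfl

lemma E2_measurePreserving : MeasurePreserving E2 volume volume := by
  have h1 : MeasurePreserving (Prod.swap : ℝ × ℝ → ℝ × ℝ) volume volume := by
    rw [Measure.volume_eq_prod]
    exact Measure.measurePreserving_swap
  have h2 := (volume_preserving_finTwoArrow ℝ).symm MeasurableEquiv.finTwoArrow
  have h3 := (EuclideanSpace.volume_preserving_symm_measurableEquiv_toLp (Fin 2)).symm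
    (MeasurableEquiv.toLp 2 (Fin 2 → ℝ)).symm
  have hco : ⇑E2 = (⇑(MeasurableEquiv.toLp 2 (Fin 2 → ℝ)) ∘
      ⇑(MeasurableEquiv.finTwoArrow (α := ℝ)).symm) ∘ Prod.swap := rfl
  rw [hco]
  exact (h3.comp h2).comp h1

/-- An iterated integral over `[0,1] × [0,b]` of a nonneg integrable function is at most the
integral over the strip. -/
lemma transfer (h : EuclideanSpace ℝ (Fin 2) → ℝ) (hc : Continuous h) (h0 : ∀ x, 0 ≤ h x)
    (hint : IntegrableOn h strip) {b : ℝ} (hb : 0 < b) (hb1 : b < 1) :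
    ∫ t in (0:ℝ)..b, ∫ s in (0:ℝ)..1, h (pt s t) ≤ ∫ x in strip, h x := by
  set R : Set (ℝ × ℝ) := Set.Ioc 0 b ×ˢ Set.Ioc 0 1 with hR
  have hF2c : Continuous fun p : ℝ × ℝ => h (pt p.2 p.1) :=
    hc.comp (continuous_pt.comp (continuous_snd.prodMk continuous_fst))
  have hRint : IntegrableOn (fun p : ℝ × ℝ => h (pt p.2 p.1)) R := by
    have hK : IntegrableOn (fun p : ℝ × ℝ => h (pt p.2 p.1))
        (Set.Icc (0:ℝ) b ×ˢ Set.Icc (0:ℝ) 1) :=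
      hF2c.continuousOn.integrableOn_compact (isCompact_Icc.prod isCompact_Icc)
    exact hK.mono_set (Set.prod_mono Set.Ioc_subset_Icc_self Set.Ioc_subset_Icc_self)
  have step1 : ∫ t in (0:ℝ)..b, ∫ s in (0:ℝ)..1, h (pt s t)
      = ∫ p in R, h (pt p.2 p.1) := by
    rw [intervalIntegral.integral_of_le hb.le]
    have : ∀ t : ℝ, ∫ s in (0:ℝ)..1, h (pt s t) = ∫ s in Set.Ioc (0:ℝ) 1, h (pt s t) :=
      fun t => intervalIntegral.integral_of_le zero_le_one
    simp_rw [this]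
    rw [hR, Measure.volume_eq_prod, setIntegral_prod _ ?_]
    rwa [← Measure.volume_eq_prod]
  have step2 : ∫ p in R, h (pt p.2 p.1) = ∫ x in E2 '' R, h x := by
    rw [E2_measurePreserving.setIntegral_image_emb E2.measurableEmbedding]
    rfl
  rw [step1, step2]
  apply setIntegral_mono_set hint (Filter.Eventually.of_forall h0)
  refine HasSubset.Subset.eventuallyLE ?_
  rintro x ⟨⟨t, s⟩, ⟨ht, _⟩, rfl⟩
  show (E2 (t, s)) 1 ∈ Set.Ioo (-1 : ℝ) 1
  rw [E2_apply, pt_apply_one]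
  exact ⟨by linarith [ht.1], by linarith [ht.2]⟩

lemma main_case (u : EuclideanSpace ℝ (Fin 2) → ℝ)
    (hu : ContDiff ℝ 1 u) (hpos : ∀ x, 0 ≤ u x)
    (hmono : ∀ a A b B : ℝ, 0 ≤ a → a ≤ A → 0 ≤ b → b ≤ B → B < 1 →
      u (pt A B) ≤ u (pt a b))
    (hL2 : IntegrableOn (fun x => u x ^ 2) strip)
    (hE : IntegrableOn (fun x => ‖fderiv ℝ u x‖ ^ 2) strip)
    (a b : ℝ) (ha0 : 0 ≤ a) (ha1 : a ≤ 1) (hb0 : 0 < b) (hb1 : b < 1) :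
    u (pt a b) ≤ (Real.sqrt b)⁻¹ *
      (Real.sqrt (∫ x in strip, u x ^ 2) +
        Real.sqrt (∫ x in strip, ‖fderiv ℝ u x‖ ^ 2)) := by
  have hcu : Continuous u := hu.continuous
  have hcg : Continuous fun x => ‖fderiv ℝ u x‖ := (hu.continuous_fderiv one_ne_zero).norm
  have hcus : ∀ c : ℝ, Continuous fun s => u (pt s c) := fun c =>
    hcu.comp (continuous_pt.comp (continuous_id.prodMk continuous_const))
  have hcgs : ∀ c : ℝ, Continuous fun s => ‖fderiv ℝ u (pt s c)‖ := fun c =>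
    hcg.comp (continuous_pt.comp (continuous_id.prodMk continuous_const))
  have hD : ∀ c s : ℝ, HasDerivAt (fun s' => u (pt s' c)) ((fderiv ℝ u (pt s c)) (pt 1 0)) s := by
    intro c s
    have h1 : HasDerivAt (fun s' : ℝ => pt 0 c + s' • pt 1 0) (pt 1 0) s := by
      simpa using ((hasDerivAt_id s).smul_const (pt 1 0)).const_add (pt 0 c)
    simp only [← pt_line] at h1
    exact ((hu.differentiable one_ne_zero) (pt s c)).hasFDerivAt.comp_hasDerivAt s h1
  have hDc : ∀ c : ℝ, Continuous fun s => (fderiv ℝ u (pt s c)) (pt 1 0) := fun c =>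
    ((hu.continuous_fderiv one_ne_zero).comp
      (continuous_pt.comp (continuous_id.prodMk continuous_const))).clm_apply continuous_const
  -- Step A: pointwise bound via monotonicity and FTC along a horizontal segment
  have stepA : ∀ x₂ ∈ Set.Icc (0:ℝ) b, ∀ x₁ ∈ Set.Icc (0:ℝ) 1,
      u (pt a b) ≤ u (pt x₁ x₂) + ∫ s in (0:ℝ)..1, ‖fderiv ℝ u (pt s x₂)‖ := by
    intro x₂ hx₂ x₁ hx₁
    have hJnn : 0 ≤ ∫ s in (0:ℝ)..1, ‖fderiv ℝ u (pt s x₂)‖ :=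
      intervalIntegral.integral_nonneg zero_le_one fun s _ => norm_nonneg _
    rcases le_total x₁ a with hle | hle
    · have := hmono x₁ a x₂ b hx₁.1 hle hx₂.1 hx₂.2 hb1
      linarith
    · have h₁ : u (pt a b) ≤ u (pt a x₂) := hmono a a x₂ b ha0 le_rfl hx₂.1 hx₂.2 hb1
      have hftc : ∫ s in a..x₁, (fderiv ℝ u (pt s x₂)) (pt 1 0)
          = u (pt x₁ x₂) - u (pt a x₂) :=
        intervalIntegral.integral_eq_sub_of_hasDerivAt (fun t _ => hD x₂ t)
          ((hDc x₂).intervalIntegrable a x₁)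
      have habs : |∫ s in a..x₁, (fderiv ℝ u (pt s x₂)) (pt 1 0)|
          ≤ ∫ s in a..x₁, |(fderiv ℝ u (pt s x₂)) (pt 1 0)| :=
        intervalIntegral.abs_integral_le_integral_abs hle
      have hmono2 : ∫ s in a..x₁, |(fderiv ℝ u (pt s x₂)) (pt 1 0)|
          ≤ ∫ s in a..x₁, ‖fderiv ℝ u (pt s x₂)‖ := by
        apply intervalIntegral.integral_mono_on hle
          ((hDc x₂).abs.intervalIntegrable a x₁) ((hcgs x₂).intervalIntegrable a x₁)
        intro s _
        calc |(fderiv ℝ u (pt s x₂)) (pt 1 0)|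
            = ‖(fderiv ℝ u (pt s x₂)) (pt 1 0)‖ := (Real.norm_eq_abs _).symm
          _ ≤ ‖fderiv ℝ u (pt s x₂)‖ * ‖pt 1 0‖ := ContinuousLinearMap.le_opNorm _ _
          _ = ‖fderiv ℝ u (pt s x₂)‖ := by rw [norm_pt_one_zero, mul_one]
      have hmono3 : ∫ s in a..x₁, ‖fderiv ℝ u (pt s x₂)‖
          ≤ ∫ s in (0:ℝ)..1, ‖fderiv ℝ u (pt s x₂)‖ :=
        intervalIntegral.integral_mono_interval ha0 hle hx₁.2
          (Filter.Eventually.of_forall fun s => norm_nonneg _)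
          ((hcgs x₂).intervalIntegrable 0 1)
      have hna := neg_abs_le (∫ s in a..x₁, (fderiv ℝ u (pt s x₂)) (pt 1 0))
      linarith
  -- Step B: integrate in the first variable over [0,1]
  have stepB : ∀ x₂ ∈ Set.Icc (0:ℝ) b,
      u (pt a b) ≤ (∫ s in (0:ℝ)..1, u (pt s x₂))
        + ∫ s in (0:ℝ)..1, ‖fderiv ℝ u (pt s x₂)‖ := by
    intro x₂ hx₂
    have hint1 : IntervalIntegrable
        (fun x₁ => u (pt x₁ x₂) + ∫ s in (0:ℝ)..1, ‖fderiv ℝ u (pt s x₂)‖) volume 0 1 :=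
      ((hcus x₂).add continuous_const).intervalIntegrable 0 1
    have h := intervalIntegral.integral_mono_on zero_le_one
      intervalIntegrable_const hint1 (fun x₁ hx₁ => stepA x₂ hx₂ x₁ hx₁)
    rw [intervalIntegral.integral_const] at h
    simp only [sub_zero, one_smul] at h
    rwa [intervalIntegral.integral_add ((hcus x₂).intervalIntegrable 0 1)
      intervalIntegrable_const, intervalIntegral.integral_const, sub_zero, one_smul] at h
  -- continuity of the parametric integrals
  have hHc : Continuous fun t => ∫ s in (0:ℝ)..1, u (pt s t) := by
    apply intervalIntegral.continuous_parametric_intervalIntegral_of_continuous' (μ := volume) ?_ 0 1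
    exact hcu.comp (continuous_pt.comp (continuous_snd.prodMk continuous_fst))
  have hJc : Continuous fun t => ∫ s in (0:ℝ)..1, ‖fderiv ℝ u (pt s t)‖ := by
    apply intervalIntegral.continuous_parametric_intervalIntegral_of_continuous' (μ := volume) ?_ 0 1
    exact hcg.comp (continuous_pt.comp (continuous_snd.prodMk continuous_fst))
  -- Step C: integrate in the second variable over [0,b]
  have stepC : b * u (pt a b) ≤ (∫ t in (0:ℝ)..b, ∫ s in (0:ℝ)..1, u (pt s t))
      + ∫ t in (0:ℝ)..b, ∫ s in (0:ℝ)..1, ‖fderiv ℝ u (pt s t)‖ := by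
    have h := intervalIntegral.integral_mono_on (μ := volume) hb0.le intervalIntegrable_const
      ((hHc.add hJc).intervalIntegrable 0 b) (fun t ht => stepB t ht)
    rw [intervalIntegral.integral_const] at h
    simp only [sub_zero, smul_eq_mul, Pi.add_apply] at h
    rwa [intervalIntegral.integral_add (hHc.intervalIntegrable 0 b)
      (hJc.intervalIntegrable 0 b)] at h
  -- Step D: Cauchy–Schwarz (twice) and comparison with the strip integral
  have stepD : ∀ φ : EuclideanSpace ℝ (Fin 2) → ℝ, Continuous φ → (∀ x, 0 ≤ φ x) →
      IntegrableOn (fun x => φ x ^ 2) strip →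
      ∫ t in (0:ℝ)..b, ∫ s in (0:ℝ)..1, φ (pt s t)
        ≤ Real.sqrt b * Real.sqrt (∫ x in strip, φ x ^ 2) := by
    intro φ hφc hφ0 hφint
    have hφs : ∀ c : ℝ, Continuous fun s => φ (pt s c) := fun c =>
      hφc.comp (continuous_pt.comp (continuous_id.prodMk continuous_const))
    have hH2c : Continuous fun t => ∫ s in (0:ℝ)..1, φ (pt s t) ^ 2 :=
      intervalIntegral.continuous_parametric_intervalIntegral_of_continuous'
        (f := fun t s => φ (pt s t) ^ 2) (μ := volume)
        ((continuous_pow 2).comp (hφc.comp (continuous_pt.comp (continuous_snd.prodMk continuous_fst)))) 0 1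
    have hH2nn : ∀ t, 0 ≤ ∫ s in (0:ℝ)..1, φ (pt s t) ^ 2 := fun t =>
      intervalIntegral.integral_nonneg zero_le_one fun s _ => sq_nonneg _
    have hHc' : Continuous fun t => ∫ s in (0:ℝ)..1, φ (pt s t) := by
      apply intervalIntegral.continuous_parametric_intervalIntegral_of_continuous' (μ := volume) ?_ 0 1
      exact hφc.comp (continuous_pt.comp (continuous_snd.prodMk continuous_fst))
    have inner : ∀ t : ℝ, (∫ s in (0:ℝ)..1, φ (pt s t))
        ≤ Real.sqrt (∫ s in (0:ℝ)..1, φ (pt s t) ^ 2) := by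
      intro t
      have := cs_interval (fun s => φ (pt s t)) (hφs t) (fun s => hφ0 _) 1 zero_le_one
      simpa using this
    calc ∫ t in (0:ℝ)..b, ∫ s in (0:ℝ)..1, φ (pt s t)
        ≤ ∫ t in (0:ℝ)..b, Real.sqrt (∫ s in (0:ℝ)..1, φ (pt s t) ^ 2) :=
          intervalIntegral.integral_mono_on hb0.le (hHc'.intervalIntegrable 0 b)
            ((Real.continuous_sqrt.comp hH2c).intervalIntegrable 0 b) (fun t _ => inner t)
      _ ≤ Real.sqrt b *
          Real.sqrt (∫ t in (0:ℝ)..b, Real.sqrt (∫ s in (0:ℝ)..1, φ (pt s t) ^ 2) ^ 2) :=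
          cs_interval _ (Real.continuous_sqrt.comp hH2c) (fun t => Real.sqrt_nonneg _) b hb0.le
      _ = Real.sqrt b * Real.sqrt (∫ t in (0:ℝ)..b, ∫ s in (0:ℝ)..1, φ (pt s t) ^ 2) := by
          congr 1
          apply congrArg
          apply intervalIntegral.integral_congr
          intro t _
          exact Real.sq_sqrt (hH2nn t)
      _ ≤ Real.sqrt b * Real.sqrt (∫ x in strip, φ x ^ 2) := by
          refine mul_le_mul_of_nonneg_left ?_ (Real.sqrt_nonneg b)
          exact Real.sqrt_le_sqrt
            (transfer (fun x => φ x ^ 2) (hφc.pow 2) (fun x => sq_nonneg _) hφint hb0 hb1)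
  have d1 := stepD u hcu hpos hL2
  have d2 := stepD (fun x => ‖fderiv ℝ u x‖) hcg (fun x => norm_nonneg _) hE
  have hfinal : b * u (pt a b) ≤ Real.sqrt b *
      (Real.sqrt (∫ x in strip, u x ^ 2) +
        Real.sqrt (∫ x in strip, ‖fderiv ℝ u x‖ ^ 2)) := by
    rw [mul_add]
    calc b * u (pt a b) ≤ _ := stepC
      _ ≤ _ := add_le_add d1 d2
  have hsb : 0 < Real.sqrt b := Real.sqrt_pos.mpr hb0
  rw [inv_mul_eq_div, le_div_iff₀ hsb]
  nlinarith [Real.mul_self_sqrt hb0.le, hpos (pt a b)]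

/-- Decay estimate in the second variable: if `u ≥ 0` is `C¹`, vanishes outside the strip
`Ω = ℝ × (-1,1)`, is even in each variable and nonincreasing in each variable on the positive
quadrant, with `u ∈ L²(Ω)` and finite Dirichlet energy, then for `|x₁| ≤ 1` and `x₂ ≠ 0`,
`u(x₁,x₂) ≤ |x₂|^{-1/2} [(∫_Ω u²)^{1/2} + (∫_Ω |∇u|²)^{1/2}]`. -/
theorem strip_decay_second_variable (u : EuclideanSpace ℝ (Fin 2) → ℝ)
    (hu : ContDiff ℝ 1 u) (hpos : ∀ x, 0 ≤ u x)
    (hzero : ∀ x, x ∉ strip → u x = 0)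
    (heven1 : ∀ a b : ℝ, u (pt (-a) b) = u (pt a b))
    (heven2 : ∀ a b : ℝ, u (pt a (-b)) = u (pt a b))
    (hmono : ∀ a A b B : ℝ, 0 ≤ a → a ≤ A → 0 ≤ b → b ≤ B → B < 1 →
      u (pt A B) ≤ u (pt a b))
    (hL2 : IntegrableOn (fun x => u x ^ 2) strip)
    (hE : IntegrableOn (fun x => ‖fderiv ℝ u x‖ ^ 2) strip) :
    ∀ a b : ℝ, |a| ≤ 1 → b ≠ 0 → b ∈ Set.Ioo (-1 : ℝ) 1 →
      u (pt a b) ≤ (Real.sqrt |b|)⁻¹ *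
        (Real.sqrt (∫ x in strip, u x ^ 2) +
          Real.sqrt (∫ x in strip, ‖fderiv ℝ u x‖ ^ 2)) := by
  intro a b ha hb hbmem
  have e1 : u (pt |a| |b|) = u (pt a b) := by
    rcases abs_choice a with h | h <;> rcases abs_choice b with h' | h' <;> rw [h, h']
    · rw [heven2 a b]
    · rw [heven1 a b]
    · rw [heven1 a (-b), heven2 a b]
  rw [← e1]
  exact main_case u hu hpos hmono hL2 hE |a| |b| (abs_nonneg a) ha
    (abs_pos.mpr hb) (abs_lt.mpr ⟨hbmem.1, hbmem.2⟩)
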